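/- Let g and h be integers with g ≥ h ≥ 2. There exists a constant C = C(g,h) > 0 such that for every positive integer n and every C_h[g] set A ⊆ {1,…,n}, we have |A| ≤ (g-1)^{1/h} · n^{1-1/h} + C · n^{1/2 - 1/(2h)}. -/

import Mathlib

/-- `A` is a `C_h[g]` set: there do not exist a set `X` of `h` integers and `g` pairwise
distinct integers `k_1, …, k_g` such that `X + k_i ⊆ A` for every `i`. -/
def IsChgSet (h g : ℕ) (A : Set ℤ) : Prop :=
  ¬ ∃ (X : Finset ℤ) (k : Fin g → ℤ), X.card = h ∧ Function.Injective k ∧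
      ∀ i : Fin g, ∀ x ∈ X, x + k i ∈ A


open Finset in
lemma key_count (g h : ℕ) (hg : 1 ≤ g) (A : Finset ℤ) (hA : IsChgSet h g ↑A) (s : ℕ)
    (K : Finset ℤ) :
    ∑ k ∈ K, ((A ∩ Finset.Icc k (k + (s:ℤ) - 1)).card.choose h) ≤ (g - 1) * s.choose h := by
  classical
  set T : Finset ((_ : ℤ) × Finset ℤ) :=
    K.sigma (fun k => (A ∩ Finset.Icc k (k + (s:ℤ) - 1)).powersetCard h) with hT
  have hcard : ∑ k ∈ K, ((A ∩ Finset.Icc k (k + (s:ℤ) - 1)).card.choose h) = T.card := by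
    rw [hT, Finset.card_sigma]
    exact Finset.sum_congr rfl fun k _ => (Finset.card_powersetCard _ _).symm
  rw [hcard]
  set f : ((_ : ℤ) × Finset ℤ) → Finset ℤ := fun p => p.2.image (fun x => x - p.1) with hf
  have hsub : ∀ p ∈ T, p.2 ⊆ A ∩ Finset.Icc p.1 (p.1 + (s:ℤ) - 1) ∧ p.2.card = h := by
    intro p hp
    rw [hT, Finset.mem_sigma] at hp
    exact Finset.mem_powersetCard.mp hp.2
  -- fibers have size ≤ g - 1
  have hfib : ∀ Q ∈ T.image f, (T.filter fun p => f p = Q).card ≤ g - 1 := by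
    intro Q hQ
    by_contra hcon
    push_neg at hcon
    have hgle : g ≤ (T.filter fun p => f p = Q).card := by omega
    set F := T.filter fun p => f p = Q with hF
    -- Q has card h
    obtain ⟨p0, hp0T, hp0⟩ := Finset.mem_image.mp hQ
    have hQcard : Q.card = h := by
      rw [← hp0, hf]
      rw [Finset.card_image_of_injective _ (sub_left_injective)]
      exact (hsub p0 hp0T).2
    -- the first components are distinct
    have hinj : Set.InjOn Sigma.fst (F : Set ((_ : ℤ) × Finset ℤ)) := by
      intro p hp q hq hpq
      simp only [hF, Finset.coe_filter, Set.mem_setOf_eq] at hp hq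
      have h2 : p.2 = q.2 := by
        have := hp.2.trans hq.2.symm
        rw [hf] at this
        simp only [hpq] at this
        exact Finset.image_injective sub_left_injective this
      exact Sigma.ext hpq (heq_of_eq h2)
    have hgle2 : g ≤ (F.image Sigma.fst).card := by
      rwa [Finset.card_image_of_injOn hinj]
    obtain ⟨G, hGsub, hGcard⟩ := Finset.exists_subset_card_eq hgle2
    set k : Fin g → ℤ := fun i => ((G.orderIsoOfFin hGcard i : ℤ)) with hk
    have hkinj : Function.Injective k := by
      intro i j hij
      exact (G.orderIsoOfFin hGcard).injective (Subtype.ext hij)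
    apply hA
    refine ⟨Q, k, hQcard, hkinj, ?_⟩
    intro i x hx
    have hki : k i ∈ F.image Sigma.fst := hGsub ((G.orderIsoOfFin hGcard i).2)
    obtain ⟨p, hpF, hp1⟩ := Finset.mem_image.mp hki
    rw [hF, Finset.mem_filter] at hpF
    have hxp : x + p.1 ∈ p.2 := by
      have : x ∈ f p := by rw [hpF.2]; exact hx
      rw [hf] at this
      obtain ⟨y, hy, hyx⟩ := Finset.mem_image.mp this
      have : x + p.1 = y := by omega
      rwa [this]
    have : x + p.1 ∈ A := (Finset.mem_inter.mp ((hsub p hpF.1).1 hxp)).1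
    rwa [hp1] at this
  calc T.card ≤ (g - 1) * (T.image f).card := Finset.card_le_mul_card_image T (g-1) hfib
    _ ≤ (g - 1) * s.choose h := by
        apply Nat.mul_le_mul_left
        have himg : T.image f ⊆ (Finset.Icc (0:ℤ) ((s:ℤ) - 1)).powersetCard h := by
          intro Q hQ
          obtain ⟨p, hpT, hp⟩ := Finset.mem_image.mp hQ
          rw [Finset.mem_powersetCard]
          constructor
          · rw [← hp, hf]
            intro x hx
            obtain ⟨y, hy, hyx⟩ := Finset.mem_image.mp hx
            have := (Finset.mem_inter.mp ((hsub p hpT).1 hy)).2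
            rw [Finset.mem_Icc] at this ⊢
            omega
          · rw [← hp, hf, Finset.card_image_of_injective _ sub_left_injective]
            exact (hsub p hpT).2
        calc (T.image f).card ≤ ((Finset.Icc (0:ℤ) ((s:ℤ) - 1)).powersetCard h).card :=
              Finset.card_le_card himg
          _ = s.choose h := by
              rw [Finset.card_powersetCard, Int.card_Icc]
              congr 1
              omega

open Finset in
lemma window_sum (n s : ℕ) (A : Finset ℤ) (hA : ↑A ⊆ Set.Icc (1:ℤ) n) :
    ∑ k ∈ Finset.Icc (2 - (s:ℤ)) n, (A ∩ Finset.Icc k (k + (s:ℤ) - 1)).card = s * A.card := by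
  classical
  have h1 : ∀ k : ℤ, (A ∩ Finset.Icc k (k + (s:ℤ) - 1)).card
      = ∑ a ∈ A, if a ∈ Finset.Icc k (k + (s:ℤ) - 1) then 1 else 0 := by
    intro k
    rw [← Finset.sum_filter, Finset.sum_const, smul_eq_mul, mul_one,
      Finset.filter_mem_eq_inter]
  simp only [h1]
  rw [Finset.sum_comm]
  have h2 : ∀ a ∈ A, (∑ k ∈ Finset.Icc (2 - (s:ℤ)) n,
      if a ∈ Finset.Icc k (k + (s:ℤ) - 1) then 1 else 0) = s := by
    intro a ha
    have haI : (1:ℤ) ≤ a ∧ a ≤ n := by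
      have := hA ha; rwa [Set.mem_Icc] at this
    rw [← Finset.sum_filter, Finset.sum_const, smul_eq_mul, mul_one]
    have : (Finset.Icc (2 - (s:ℤ)) n).filter
        (fun k => a ∈ Finset.Icc k (k + (s:ℤ) - 1)) = Finset.Icc (a - s + 1) a := by
      ext k
      simp only [Finset.mem_filter, Finset.mem_Icc]
      omega
    rw [this, Int.card_Icc]
    omega
  rw [Finset.sum_congr rfl h2, Finset.sum_const, smul_eq_mul, mul_comm]

open Finset in
lemma main_bound (g h : ℕ) (hgh : h ≤ g) (hh : 2 ≤ h) (n s : ℕ) (hs : 1 ≤ s) (hn : 1 ≤ n)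
    (A : Finset ℤ) (hA : ↑A ⊆ Set.Icc (1:ℤ) n) (hC : IsChgSet h g ↑A) :
    (A.card : ℝ) ≤ ((g:ℝ) - 1) ^ ((1:ℝ)/h) * ((n + s : ℝ)) ^ (1 - (1:ℝ)/h)
      + (h : ℝ) * (n + s) / s := by
  classical
  have hg2 : 2 ≤ g := le_trans hh hgh
  have hhR : (0:ℝ) < h := by positivity
  have hh0 : h ≠ 0 := by omega
  set K := Finset.Icc (2 - (s:ℤ)) (n:ℤ) with hK
  set a : ℤ → ℕ := fun k => (A ∩ Finset.Icc k (k + (s:ℤ) - 1)).card with ha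
  have hNcard : K.card = n + s - 1 := by
    rw [hK, Int.card_Icc]; omega
  set N := n + s - 1 with hNdef
  have hN1 : 1 ≤ N := by omega
  -- Step A
  have hstepA : s * A.card ≤ (∑ k ∈ K, (a k + 1 - h)) + N * (h - 1) := by
    have := window_sum n s A hA
    rw [hK] at *
    calc s * A.card = ∑ k ∈ Finset.Icc (2 - (s:ℤ)) (n:ℤ), a k := this.symm
      _ ≤ ∑ k ∈ Finset.Icc (2 - (s:ℤ)) (n:ℤ), ((a k + 1 - h) + (h - 1)) :=
          Finset.sum_le_sum (fun k _ => by omega)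
      _ = (∑ k ∈ Finset.Icc (2 - (s:ℤ)) (n:ℤ), (a k + 1 - h)) + N * (h-1) := by
          rw [Finset.sum_add_distrib, Finset.sum_const, smul_eq_mul, hNcard]
  -- Step B
  have hstepB : ∑ k ∈ K, (a k + 1 - h)^h ≤ (g - 1) * s^h := by
    calc ∑ k ∈ K, (a k + 1 - h)^h ≤ ∑ k ∈ K, (a k).descFactorial h :=
          Finset.sum_le_sum (fun k _ => Nat.pow_sub_le_descFactorial (a k) h)
      _ = ∑ k ∈ K, Nat.factorial h * (a k).choose h := by
          exact Finset.sum_congr rfl (fun k _ => Nat.descFactorial_eq_factorial_mul_choose _ _)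
      _ = Nat.factorial h * ∑ k ∈ K, (a k).choose h := by rw [Finset.mul_sum]
      _ ≤ Nat.factorial h * ((g - 1) * s.choose h) :=
          Nat.mul_le_mul_left _ (key_count g h (by omega) A hC s K)
      _ = (g - 1) * (Nat.factorial h * s.choose h) := by ring
      _ = (g - 1) * s.descFactorial h := by
          rw [Nat.descFactorial_eq_factorial_mul_choose]
      _ ≤ (g - 1) * s^h := Nat.mul_le_mul_left _ (Nat.descFactorial_le_pow s h)
  -- Step C: power mean
  set Mn := ∑ k ∈ K, (a k + 1 - h) with hMn
  have hMncast : ((Mn : ℕ) : ℝ) = ∑ k ∈ K, ((a k + 1 - h : ℕ) : ℝ) := by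
    rw [hMn]; push_cast; ring
  have hNpos : (0:ℝ) < (N:ℝ) := by positivity
  have hstepC : ((Mn:ℝ))^h ≤ (N:ℝ)^(h-1) * (((g - 1 : ℕ):ℝ) * (s:ℝ)^h) := by
    have hpm := pow_sum_le_card_mul_sum_pow
      (s := K) (f := fun k => ((a k + 1 - h : ℕ) : ℝ)) (fun i _ => by positivity) (h - 1)
    rw [hNcard] at hpm
    have hexp : h - 1 + 1 = h := by omega
    rw [hexp] at hpm
    rw [hMncast]
    calc (∑ k ∈ K, ((a k + 1 - h : ℕ) : ℝ))^h
        ≤ (N:ℝ)^(h-1) * (∑ k ∈ K, ((a k + 1 - h : ℕ) : ℝ)^h) := hpm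
      _ ≤ (N:ℝ)^(h-1) * (((g - 1 : ℕ):ℝ) * (s:ℝ)^h) := by
          apply mul_le_mul_of_nonneg_left _ (by positivity)
          have : (∑ k ∈ K, ((a k + 1 - h : ℕ) : ℝ)^h)
              = (((∑ k ∈ K, (a k + 1 - h)^h : ℕ)) : ℝ) := by push_cast; ring
          rw [this]
          have := hstepB
          calc (((∑ k ∈ K, (a k + 1 - h)^h : ℕ)) : ℝ) ≤ (((g - 1) * s^h : ℕ) : ℝ) := by
                exact_mod_cast this
            _ = ((g - 1 : ℕ):ℝ) * (s:ℝ)^h := by push_cast; ring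
  -- Step D: take h-th roots
  have hcastg : ((g - 1 : ℕ):ℝ) = (g:ℝ) - 1 := by
    have : (1:ℕ) ≤ g := by omega
    push_cast [Nat.cast_sub this]; ring
  have hg1R : (0:ℝ) ≤ (g:ℝ) - 1 := by
    have : (2:ℝ) ≤ (g:ℝ) := by exact_mod_cast hg2
    linarith
  have hstepD : (Mn:ℝ) ≤ ((g:ℝ) - 1) ^ ((1:ℝ)/h) * (s:ℝ) * (N:ℝ)^(1 - (1:ℝ)/h) := by
    have hB : (0:ℝ) ≤ (N:ℝ)^(h-1) * (((g:ℝ) - 1) * (s:ℝ)^h) := by positivity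
    have hMle : (Mn:ℝ) ≤ ((N:ℝ)^(h-1) * (((g:ℝ) - 1) * (s:ℝ)^h)) ^ ((h:ℝ)⁻¹) := by
      have h1 : (Mn:ℝ) = ((Mn:ℝ)^h) ^ ((h:ℝ)⁻¹) :=
        (Real.pow_rpow_inv_natCast (by positivity) hh0).symm
      rw [h1]
      apply Real.rpow_le_rpow (by positivity) _ (by positivity)
      rw [hcastg] at hstepC
      exact hstepC
    refine hMle.trans (le_of_eq ?_)
    rw [Real.mul_rpow (by positivity) (by positivity),
        Real.mul_rpow hg1R (by positivity),
        Real.pow_rpow_inv_natCast (by positivity) hh0]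
    have hNh : ((N:ℝ)^(h-1 : ℕ)) ^ ((h:ℝ)⁻¹) = (N:ℝ) ^ (1 - (1:ℝ)/h) := by
      rw [← Real.rpow_natCast (N:ℝ) (h-1), ← Real.rpow_mul (le_of_lt hNpos)]
      congr 1
      have : ((h - 1 : ℕ):ℝ) = (h:ℝ) - 1 := by
        have : (1:ℕ) ≤ h := by omega
        push_cast [Nat.cast_sub this]; ring
      rw [this]
      field_simp
    rw [hNh]
    rw [one_div]
    ring
  -- Step E: combine
  have hspos : (0:ℝ) < (s:ℝ) := by exact_mod_cast hs
  rw [← mul_le_mul_iff_right₀ hspos]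
  have hexpand : (s:ℝ) * (((g:ℝ) - 1) ^ ((1:ℝ)/h) * ((n + s : ℝ)) ^ (1 - (1:ℝ)/h)
      + (h : ℝ) * (n + s) / s)
      = ((g:ℝ) - 1) ^ ((1:ℝ)/h) * (s:ℝ) * ((n:ℝ) + s) ^ (1 - (1:ℝ)/h) + (h:ℝ) * ((n:ℝ) + s) := by
    field_simp
  rw [hexpand]
  have hNle : (N:ℝ) ≤ (n:ℝ) + s := by
    have : (N:ℕ) ≤ n + s := by omega
    exact_mod_cast this
  have h1h : (0:ℝ) ≤ 1 - (1:ℝ)/h := by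
    rw [sub_nonneg, div_le_one hhR]
    exact_mod_cast (by omega : 1 ≤ h)
  calc (s:ℝ) * A.card ≤ (Mn:ℝ) + (N:ℝ) * ((h:ℝ) - 1) := by
        have : ((s * A.card : ℕ):ℝ) ≤ ((Mn + N * (h - 1) : ℕ):ℝ) := by exact_mod_cast hstepA
        push_cast [Nat.cast_sub (by omega : (1:ℕ) ≤ h)] at this
        linarith
    _ ≤ ((g:ℝ) - 1) ^ ((1:ℝ)/h) * (s:ℝ) * (N:ℝ)^(1 - (1:ℝ)/h) + (N:ℝ) * ((h:ℝ) - 1) := by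
        linarith [hstepD]
    _ ≤ ((g:ℝ) - 1) ^ ((1:ℝ)/h) * (s:ℝ) * ((n:ℝ) + s)^(1 - (1:ℝ)/h) + (h:ℝ) * ((n:ℝ) + s) := by
        have t1 : (N:ℝ)^(1 - (1:ℝ)/h) ≤ ((n:ℝ) + s)^(1 - (1:ℝ)/h) :=
          Real.rpow_le_rpow (le_of_lt hNpos) hNle h1h
        have t2 : (N:ℝ) * ((h:ℝ) - 1) ≤ (h:ℝ) * ((n:ℝ) + s) := by
          have hhR1 : (1:ℝ) ≤ (h:ℝ) := by exact_mod_cast (by omega : 1 ≤ h)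
          nlinarith
        have hge : (0:ℝ) ≤ ((g:ℝ) - 1) ^ ((1:ℝ)/h) * (s:ℝ) := by positivity
        nlinarith

set_option maxHeartbeats 1600000 in
open Finset in
theorem stmt0 (g h : ℕ) (hgh : h ≤ g) (hh : 2 ≤ h) :
    ∃ C : ℝ, 0 < C ∧ ∀ n : ℕ, 0 < n → ∀ A : Finset ℤ,
      ↑A ⊆ Set.Icc (1 : ℤ) n → IsChgSet h g ↑A →
      (A.card : ℝ) ≤ ((g : ℝ) - 1) ^ ((1 : ℝ) / h) * (n : ℝ) ^ (1 - (1 : ℝ) / h)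
        + C * (n : ℝ) ^ ((1 : ℝ) / 2 - 1 / (2 * h)) := by
  have hg2 : 2 ≤ g := le_trans hh hgh
  have hhR : (0:ℝ) < (h:ℝ) := by positivity
  have hhR2 : (2:ℝ) ≤ (h:ℝ) := by exact_mod_cast hh
  have hg1R : (0:ℝ) ≤ (g:ℝ) - 1 := by
    have : (2:ℝ) ≤ (g:ℝ) := by exact_mod_cast hg2
    linarith
  have hG0 : (0:ℝ) ≤ ((g:ℝ) - 1) ^ ((1:ℝ)/h) := Real.rpow_nonneg hg1R _
  refine ⟨2 * ((g:ℝ) - 1) ^ ((1:ℝ)/h) + 2 * h, by positivity, ?_⟩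
  intro n hn A hA hC
  set β : ℝ := 1/2 + 1/(2*(h:ℝ)) with hβdef
  set γ : ℝ := (1:ℝ)/2 - 1/(2*(h:ℝ)) with hγdef
  have hβ0 : 0 ≤ β := by rw [hβdef]; positivity
  have hγ0 : 0 ≤ γ := by
    rw [hγdef]
    have : 1/(2*(h:ℝ)) ≤ 1/2 := by
      apply div_le_div_of_nonneg_left (by norm_num) (by norm_num)
      linarith
    linarith
  have hn1 : (1:ℝ) ≤ (n:ℝ) := by exact_mod_cast hn
  have hnpos : (0:ℝ) < (n:ℝ) := by linarith
  set s : ℕ := ⌈(n:ℝ)^β⌉₊ with hsdef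
  have hnβ1 : (1:ℝ) ≤ (n:ℝ)^β := Real.one_le_rpow hn1 hβ0
  have hnγ1 : (1:ℝ) ≤ (n:ℝ)^γ := Real.one_le_rpow hn1 hγ0
  have hs1 : 1 ≤ s := by
    rw [hsdef, Nat.one_le_ceil_iff]; linarith
  have hsge : (n:ℝ)^β ≤ (s:ℝ) := Nat.le_ceil _
  have hsle : (s:ℝ) ≤ 2 * (n:ℝ)^β := by
    have := (Nat.ceil_lt_add_one (by positivity : (0:ℝ) ≤ (n:ℝ)^β)).le
    rw [hsdef]
    linarith
  have hspos : (0:ℝ) < (s:ℝ) := by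
    have : (1:ℝ) ≤ (s:ℝ) := by exact_mod_cast hs1
    linarith
  clear_value β γ s
  have hmain := main_bound g h hgh hh n s hs1 (by omega) A hA hC
  have hh0 : (h:ℝ) ≠ 0 := ne_of_gt hhR
  -- exponent identities
  have hβγ : β - 1/(h:ℝ) = γ - 1 + 1 := by
    rw [hβdef, hγdef]; field_simp; ring
  have h1β : 1 - β = γ := by rw [hβdef, hγdef]; ring
  -- bound (n+s)^(1-1/h)
  have hexp1 : (1:ℝ) - 1/(h:ℝ) ≤ 1 := by
    have : 0 ≤ 1/(h:ℝ) := by positivity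
    linarith
  have key1 : ((n:ℝ) + s) ^ (1 - (1:ℝ)/h) ≤ (n:ℝ) ^ (1 - (1:ℝ)/h) + 2 * (n:ℝ)^γ := by
    have hfactor : ((n:ℝ) + s) = (n:ℝ) * (1 + (s:ℝ)/(n:ℝ)) := by field_simp
    have hbase1 : (1:ℝ) ≤ 1 + (s:ℝ)/(n:ℝ) := by
      have := div_nonneg hspos.le hnpos.le
      linarith
    calc ((n:ℝ) + s) ^ (1 - (1:ℝ)/h)
        = (n:ℝ) ^ (1 - (1:ℝ)/h) * (1 + (s:ℝ)/(n:ℝ)) ^ (1 - (1:ℝ)/h) := by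
          rw [hfactor, Real.mul_rpow (le_of_lt hnpos) (by linarith)]
      _ ≤ (n:ℝ) ^ (1 - (1:ℝ)/h) * (1 + (s:ℝ)/(n:ℝ)) := by
          apply mul_le_mul_of_nonneg_left _ (Real.rpow_nonneg (le_of_lt hnpos) _)
          calc (1 + (s:ℝ)/(n:ℝ)) ^ (1 - (1:ℝ)/h)
              ≤ (1 + (s:ℝ)/(n:ℝ)) ^ (1:ℝ) :=
                Real.rpow_le_rpow_of_exponent_le hbase1 hexp1
            _ = 1 + (s:ℝ)/(n:ℝ) := Real.rpow_one _
      _ = (n:ℝ) ^ (1 - (1:ℝ)/h) + (s:ℝ) * ((n:ℝ) ^ (1 - (1:ℝ)/h) / (n:ℝ)) := by ring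
      _ ≤ (n:ℝ) ^ (1 - (1:ℝ)/h) + 2 * (n:ℝ)^γ := by
          have e1 : (n:ℝ) ^ (1 - (1:ℝ)/h) / (n:ℝ) = (n:ℝ) ^ (-(1:ℝ)/h) := by
            have t := Real.rpow_sub hnpos (1 - (1:ℝ)/h) 1
            rw [Real.rpow_one] at t
            rw [← t]
            congr 1
            ring
          rw [e1]
          have e2 : (s:ℝ) * (n:ℝ) ^ (-(1:ℝ)/h) ≤ 2 * (n:ℝ)^β * (n:ℝ) ^ (-(1:ℝ)/h) := by
            apply mul_le_mul_of_nonneg_right hsle (Real.rpow_nonneg (le_of_lt hnpos) _)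
          have e3 : (n:ℝ)^β * (n:ℝ) ^ (-(1:ℝ)/h) = (n:ℝ)^γ := by
            rw [← Real.rpow_add hnpos]
            congr 1
            rw [hβdef, hγdef]; field_simp; ring
          nlinarith [e2, e3]
  -- bound h*(n+s)/s
  have key2 : (h:ℝ) * ((n:ℝ) + s) / s ≤ 2 * (h:ℝ) * (n:ℝ)^γ := by
    have hns : (n:ℝ)/s ≤ (n:ℝ)^γ := by
      have : (n:ℝ)/s ≤ (n:ℝ)/(n:ℝ)^β := by
        apply div_le_div_of_nonneg_left (le_of_lt hnpos) (by positivity) hsge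
      have e : (n:ℝ)/(n:ℝ)^β = (n:ℝ)^γ := by
        have t := Real.rpow_sub hnpos 1 β
        rw [Real.rpow_one] at t
        rw [← t, h1β]
      rw [e] at this
      exact this
    have : (h:ℝ) * ((n:ℝ) + s) / s = (h:ℝ) * ((n:ℝ)/s) + (h:ℝ) := by
      field_simp
    rw [this]
    have h1 : (h:ℝ) * ((n:ℝ)/s) ≤ (h:ℝ) * (n:ℝ)^γ :=
      mul_le_mul_of_nonneg_left hns (by positivity)
    nlinarith [hnγ1]
  set G := ((g:ℝ) - 1) ^ ((1:ℝ)/h) with hGdef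
  have t1 : G * ((n:ℝ) + (s:ℝ)) ^ (1 - (1:ℝ)/h)
      ≤ G * (n:ℝ) ^ (1 - (1:ℝ)/h) + 2 * (G * (n:ℝ)^γ) := by
    have t0 := mul_le_mul_of_nonneg_left key1 hG0
    have expand : G * ((n:ℝ) ^ (1 - (1:ℝ)/h) + 2 * (n:ℝ)^γ)
        = G * (n:ℝ) ^ (1 - (1:ℝ)/h) + 2 * (G * (n:ℝ)^γ) := by ring
    linarith
  clear_value G
  have hCexp : (2 * G + 2 * (h:ℝ)) * (n:ℝ)^γ
      = 2 * (G * (n:ℝ)^γ) + 2 * ((h:ℝ) * (n:ℝ)^γ) := by ring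
  have key2' : (h:ℝ) * ((n:ℝ) + s) / s ≤ 2 * ((h:ℝ) * (n:ℝ)^γ) := by linarith [key2]
  linarith [hmain, t1, key2']
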